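/- Let K be a field, r ≥ 2, and let a : ℕʳ → K be a rational r-sequence such that for each (r−1)-tuple (n₁,…,n_{r−1}) ∈ ℕ^{r−1} the set {n_r ∈ ℕ : a(n₁,…,n_{r−1},n_r) ≠ 0} is finite. Then the (r−1)-sequence a' : ℕ^{r−1} → K defined by a'(n₁,…,n_{r−1}) = Σ_{n_r ∈ ℕ} a(n₁,…,n_{r−1},n_r) (a finite sum) is rational. -/

import Mathlib

noncomputable section AuxTrunc

open MvPolynomial

variable {K : Type*} [Field K] {r : ℕ}

/-! ### Finsupp `snoc` utilities -/

def snocF (m : Fin r →₀ ℕ) (j : ℕ) : Fin (r+1) →₀ ℕ :=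
  Finsupp.equivFunOnFinite.symm (Fin.snoc ⇑m j)

def initF (d : Fin (r+1) →₀ ℕ) : Fin r →₀ ℕ :=
  Finsupp.equivFunOnFinite.symm (Fin.init ⇑d)

def lastF (d : Fin (r+1) →₀ ℕ) : ℕ := d (Fin.last r)

@[simp] lemma snocF_coe (m : Fin r →₀ ℕ) (j : ℕ) : ⇑(snocF m j) = Fin.snoc ⇑m j :=
  Finsupp.equivFunOnFinite.apply_symm_apply _

@[simp] lemma initF_apply (d : Fin (r+1) →₀ ℕ) (i : Fin r) : initF d i = d i.castSucc :=
  congrFun (Finsupp.equivFunOnFinite.apply_symm_apply (Fin.init ⇑d)) i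

@[simp] lemma snocF_castSucc (m : Fin r →₀ ℕ) (j : ℕ) (i : Fin r) :
    snocF m j i.castSucc = m i := by simp

@[simp] lemma snocF_last (m : Fin r →₀ ℕ) (j : ℕ) : snocF m j (Fin.last r) = j := by simp

lemma le_snocF_iff {d : Fin (r+1) →₀ ℕ} {m : Fin r →₀ ℕ} {j : ℕ} :
    d ≤ snocF m j ↔ initF d ≤ m ∧ lastF d ≤ j := by
  simp only [Finsupp.le_def]
  constructor
  · intro h
    exact ⟨fun i => by simpa using h i.castSucc, by simpa [lastF] using h (Fin.last r)⟩
  · rintro ⟨h1, h2⟩ i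
    induction i using Fin.lastCases with
    | last => simpa [lastF] using h2
    | cast i => simpa using h1 i

lemma snocF_sub (m : Fin r →₀ ℕ) (j : ℕ) (d : Fin (r+1) →₀ ℕ) :
    snocF m j - d = snocF (m - initF d) (j - lastF d) := by
  ext i
  induction i using Fin.lastCases with
  | last => simp [lastF, Finsupp.tsub_apply]
  | cast i => simp [Finsupp.tsub_apply]

lemma snocF_eq_zero {m : Fin r →₀ ℕ} {j : ℕ} : snocF m j = 0 ↔ m = 0 ∧ j = 0 := by
  constructor
  · intro h
    constructor
    · ext i; have := congrArg (fun d : Fin (r+1) →₀ ℕ => d i.castSucc) h; simpa using this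
    · have := congrArg (fun d : Fin (r+1) →₀ ℕ => d (Fin.last r)) h; simpa using this
  · rintro ⟨rfl, rfl⟩; ext i; induction i using Fin.lastCases <;> simp

/-! ### Summing out the last variable -/

def Fine (f : MvPowerSeries (Fin (r+1)) K) : Prop :=
  ∀ m : Fin r →₀ ℕ, (Function.support fun j => MvPowerSeries.coeff (snocF m j) f).Finite

def sigmaLast (f : MvPowerSeries (Fin (r+1)) K) : MvPowerSeries (Fin r) K :=
  fun m => ∑ᶠ j : ℕ, MvPowerSeries.coeff (snocF m j) f

lemma coeff_sigmaLast (f : MvPowerSeries (Fin (r+1)) K) (m : Fin r →₀ ℕ) :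
    MvPowerSeries.coeff m (sigmaLast f) =
      ∑ᶠ j : ℕ, MvPowerSeries.coeff (snocF m j) f := rfl

lemma fine_add {f g : MvPowerSeries (Fin (r+1)) K} (hf : Fine f) (hg : Fine g) :
    Fine (f + g) := by
  intro m
  apply Set.Finite.subset ((hf m).union (hg m))
  intro j hj
  simp only [Function.mem_support, map_add] at hj
  by_contra hc
  simp only [Set.mem_union, Function.mem_support, not_or, not_not] at hc
  rw [hc.1, hc.2, add_zero] at hj
  exact hj rfl

lemma sigma_add {f g : MvPowerSeries (Fin (r+1)) K} (hf : Fine f) (hg : Fine g) :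
    sigmaLast (f + g) = sigmaLast f + sigmaLast g := by
  apply MvPowerSeries.ext
  intro m
  rw [map_add, coeff_sigmaLast, coeff_sigmaLast, coeff_sigmaLast,
    ← finsum_add_distrib (hf m) (hg m)]
  simp [map_add]

lemma finsum_shift (g : ℕ → K) (hg : (Function.support g).Finite) (k : ℕ) :
    ∑ᶠ j : ℕ, (if k ≤ j then g (j - k) else 0) = ∑ᶠ j : ℕ, g j := by
  classical
  have h2 : Function.support (fun j => if k ≤ j then g (j - k) else 0) ⊆
      ↑(hg.toFinset.image (· + k)) := by
    intro j hj
    simp only [Function.mem_support, ne_eq, ite_eq_right_iff, not_forall] at hj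
    obtain ⟨hk, hne⟩ := hj
    simp only [Finset.coe_image, Set.mem_image, Finset.mem_coe, Set.Finite.mem_toFinset]
    exact ⟨j - k, hne, by omega⟩
  rw [finsum_eq_finset_sum_of_support_subset _ h2, Finset.sum_image (by intro a _ b _ h; simp only at h; omega),
    finsum_eq_sum g hg]
  apply Finset.sum_congr rfl
  intro x _
  simp

lemma coeff_mul_monomial_snocF (f : MvPowerSeries (Fin (r+1)) K) (d : Fin (r+1) →₀ ℕ) (c : K)
    (m : Fin r →₀ ℕ) (j : ℕ) :
    MvPowerSeries.coeff (snocF m j) (f * MvPowerSeries.monomial d c) =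
      if initF d ≤ m ∧ lastF d ≤ j then
        MvPowerSeries.coeff (snocF (m - initF d) (j - lastF d)) f * c else 0 := by
  rw [MvPowerSeries.coeff_mul_monomial, snocF_sub]
  congr 1
  exact propext le_snocF_iff

lemma fine_mul_monomial (f : MvPowerSeries (Fin (r+1)) K) (hf : Fine f)
    (d : Fin (r+1) →₀ ℕ) (c : K) : Fine (f * MvPowerSeries.monomial d c) := by
  intro m
  apply Set.Finite.subset (((hf (m - initF d)).image (· + lastF d)))
  intro j hj
  rw [Function.mem_support, coeff_mul_monomial_snocF] at hj
  split at hj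
  · rename_i h
    refine ⟨j - lastF d, fun hz => hj ?_, by simp; omega⟩
    simp only at hz
    rw [hz, zero_mul]
  · exact absurd rfl hj

lemma sigma_mul_monomial (f : MvPowerSeries (Fin (r+1)) K) (hf : Fine f)
    (d : Fin (r+1) →₀ ℕ) (c : K) :
    sigmaLast (f * MvPowerSeries.monomial d c) =
      sigmaLast f * MvPowerSeries.monomial (initF d) c := by
  apply MvPowerSeries.ext
  intro e
  rw [coeff_sigmaLast, MvPowerSeries.coeff_mul_monomial]
  by_cases h : initF d ≤ e
  · simp only [coeff_mul_monomial_snocF, h, true_and, if_pos h]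
    have hsup : (Function.support fun j =>
        MvPowerSeries.coeff (snocF (e - initF d) j) f * c).Finite := by
      apply Set.Finite.subset (hf (e - initF d))
      intro j hj
      rw [Function.mem_support] at hj ⊢
      exact fun hz => hj (by rw [hz, zero_mul])
    rw [finsum_shift _ hsup (lastF d), coeff_sigmaLast, finsum_mul _ _]
    simp
  · simp only [coeff_mul_monomial_snocF, h, false_and, if_false, finsum_zero]

def piLast : MvPolynomial (Fin (r+1)) K →ₐ[K] MvPolynomial (Fin r) K :=
  aeval (Fin.snoc X 1)

lemma piLast_monomial (d : Fin (r+1) →₀ ℕ) (c : K) :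
    piLast (monomial d c) = monomial (initF d) c := by
  rw [piLast, aeval_monomial, monomial_eq,
    Finsupp.prod_fintype _ _ (fun i => pow_zero _), Finsupp.prod_fintype _ _ (fun i => pow_zero _),
    Fin.prod_univ_castSucc]
  simp [algebraMap_eq]

lemma fine_one : Fine (1 : MvPowerSeries (Fin (r+1)) K) := by
  classical
  intro m
  apply Set.Finite.subset (Set.finite_singleton 0)
  intro j hj
  rw [Function.mem_support, MvPowerSeries.coeff_one] at hj
  rcases eq_or_ne (snocF m j) 0 with h | h
  · exact (snocF_eq_zero.mp h).2 ▸ rfl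
  · exact absurd (if_neg h) hj

lemma sigma_one : sigmaLast (1 : MvPowerSeries (Fin (r+1)) K) = 1 := by
  classical
  apply MvPowerSeries.ext
  intro m
  rw [coeff_sigmaLast, MvPowerSeries.coeff_one]
  rcases eq_or_ne m 0 with rfl | hm
  · rw [if_pos rfl, finsum_eq_single _ 0 (by
      intro j hj
      rw [MvPowerSeries.coeff_one, if_neg (fun hz => hj (snocF_eq_zero.mp hz).2)])]
    rw [MvPowerSeries.coeff_one, if_pos (snocF_eq_zero.mpr ⟨rfl, rfl⟩)]
  · rw [if_neg hm]
    apply finsum_eq_zero_of_forall_eq_zero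
    intro j
    rw [MvPowerSeries.coeff_one, if_neg (fun hz => hm (snocF_eq_zero.mp hz).1)]

lemma fine_sigma_mul (f : MvPowerSeries (Fin (r+1)) K) (hf : Fine f)
    (Q : MvPolynomial (Fin (r+1)) K) :
    Fine (f * (Q : MvPowerSeries (Fin (r+1)) K)) ∧
      sigmaLast (f * (Q : MvPowerSeries (Fin (r+1)) K)) =
        sigmaLast f * (piLast Q : MvPowerSeries (Fin r) K) := by
  induction Q using MvPolynomial.induction_on' with
  | monomial d c =>
      rw [coe_monomial, piLast_monomial, coe_monomial]
      exact ⟨fine_mul_monomial f hf d c, sigma_mul_monomial f hf d c⟩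
  | add p q hp hq =>
      rw [coe_add, mul_add, map_add, coe_add, mul_add, ← hp.2, ← hq.2]
      exact ⟨fine_add hp.1 hq.1, sigma_add hp.1 hq.1⟩

lemma sigma_coe (Q : MvPolynomial (Fin (r+1)) K) :
    sigmaLast (Q : MvPowerSeries (Fin (r+1)) K) = (piLast Q : MvPowerSeries (Fin r) K) := by
  have h := (fine_sigma_mul 1 fine_one Q).2
  rwa [one_mul, sigma_one, one_mul] at h

lemma fine_coe (Q : MvPolynomial (Fin (r+1)) K) :
    Fine (Q : MvPowerSeries (Fin (r+1)) K) := by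
  have h := (fine_sigma_mul 1 fine_one Q).1
  rwa [one_mul] at h

/-! ### A power series which becomes polynomial after multiplication by a nonzero
polynomial is rational with denominator having nonzero constant term. -/

lemma monomials_high_degree_mem_pow (g : MvPolynomial (Fin r) K) (N : ℕ)
    (h : ∀ e ∈ g.support, N ≤ e.sum fun _ n => n) :
    g ∈ (Ideal.span (Set.range (X : Fin r → MvPolynomial (Fin r) K))) ^ N := by
  classical
  set MM : Ideal (MvPolynomial (Fin r) K) := Ideal.span (Set.range X) with hMM
  have key : ∀ (s : Finset (Fin r)) (e : Fin r →₀ ℕ),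
      (∏ i ∈ s, (X i : MvPolynomial (Fin r) K) ^ e i) ∈ MM ^ (∑ i ∈ s, e i) := by
    intro s e
    induction s using Finset.induction_on with
    | empty => simp [Ideal.one_eq_top]
    | insert _ _ hnot ih =>
        rename_i a s
        rw [Finset.prod_insert hnot, Finset.sum_insert hnot, pow_add]
        exact Ideal.mul_mem_mul (Ideal.pow_mem_pow (Ideal.subset_span (Set.mem_range_self a)) _) ih
  nth_rewrite 1 [g.as_sum]
  apply Ideal.sum_mem
  intro e he
  rw [monomial_eq]
  apply Ideal.mul_mem_left
  have h1 : (e.prod fun i k => (X i : MvPolynomial (Fin r) K) ^ k) ∈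
      MM ^ (e.sum fun _ n => n) := key e.support e
  exact Ideal.pow_le_pow_right (h e he) h1

lemma exists_poly_denom (f : MvPowerSeries (Fin r) K) (q p : MvPolynomial (Fin r) K)
    (hq : q ≠ 0) (h : f * (q : MvPowerSeries (Fin r) K) = (p : MvPowerSeries (Fin r) K)) :
    ∃ g h' : MvPolynomial (Fin r) K, MvPolynomial.coeff 0 h' ≠ 0 ∧
      f * (h' : MvPowerSeries (Fin r) K) = (g : MvPowerSeries (Fin r) K) := by
  classical
  set MM : Ideal (MvPolynomial (Fin r) K) := Ideal.span (Set.range X) with hMM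
  set I : Ideal (MvPolynomial (Fin r) K) := Ideal.span {q} with hI
  have step1 : ∀ N : ℕ, ∃ t : MvPolynomial (Fin r) K, p - t * q ∈ MM ^ N := by
    intro N
    set bound : Fin r →₀ ℕ := Finsupp.equivFunOnFinite.symm (fun _ => N) with hbound
    set t : MvPolynomial (Fin r) K := ∑ e ∈ Finset.Iic bound, monomial e (MvPowerSeries.coeff e f) with ht
    have hcoefft : ∀ u : Fin r →₀ ℕ, u ≤ bound →
        MvPolynomial.coeff u t = MvPowerSeries.coeff u f := by
      intro u hu
      rw [ht, MvPolynomial.coeff_sum]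
      simp only [MvPolynomial.coeff_monomial]
      rw [Finset.sum_ite_eq', if_pos (Finset.mem_Iic.mpr hu)]
    refine ⟨t, monomials_high_degree_mem_pow _ N ?_⟩
    intro e he
    rw [MvPolynomial.mem_support_iff] at he
    by_contra hlt
    push_neg at hlt
    have hle : e ≤ bound := by
      rw [Finsupp.le_def]
      intro i
      have h1 : e i ≤ e.sum fun _ n => n := by
        rcases eq_or_ne (e i) 0 with hz | hz
        · simp [hz]
        · exact Finset.single_le_sum (fun j _ => Nat.zero_le (e j))
            (Finsupp.mem_support_iff.mpr hz)
      have : e i < N := lt_of_le_of_lt h1 hlt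
      have hb : bound i = N := congrFun (Finsupp.equivFunOnFinite.apply_symm_apply (fun _ : Fin r => N)) i
      omega
    apply he
    have hcast : ((p - t * q : MvPolynomial (Fin r) K) : MvPowerSeries (Fin r) K) =
        (p : MvPowerSeries (Fin r) K) - (t : MvPowerSeries (Fin r) K) * q := by
      rw [← MvPolynomial.coeToMvPowerSeries.ringHom_apply, map_sub, map_mul]
      rfl
    have hthis : MvPolynomial.coeff e (p - t * q) =
        MvPowerSeries.coeff e ((p - t * q : MvPolynomial (Fin r) K) : MvPowerSeries (Fin r) K) :=
      (MvPolynomial.coeff_coe _ _).symm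
    rw [hthis, hcast, map_sub, ← h, MvPowerSeries.coeff_mul, MvPowerSeries.coeff_mul]
    rw [sub_eq_zero]
    apply Finset.sum_congr rfl
    intro x hx
    rw [Finset.HasAntidiagonal.mem_antidiagonal] at hx
    have hx1 : x.1 ≤ e := hx ▸ le_add_right le_rfl
    rw [MvPolynomial.coeff_coe, MvPolynomial.coeff_coe, hcoefft x.1 (le_trans hx1 hle)]
  have step2 : Ideal.Quotient.mk I p ∈
      (⨅ i : ℕ, MM ^ i • ⊤ :
        Submodule (MvPolynomial (Fin r) K) (MvPolynomial (Fin r) K ⧸ I)) := by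
    rw [Submodule.mem_iInf]
    intro i
    obtain ⟨t, ht⟩ := step1 i
    have h1 : Ideal.Quotient.mk I p = Ideal.Quotient.mk I (p - t * q) := by
      rw [map_sub, Ideal.Quotient.eq_zero_iff_mem.mpr
        (I.mul_mem_left t (Ideal.mem_span_singleton_self q)), sub_zero]
    have h2 : Ideal.Quotient.mk I (p - t * q) = (p - t * q) • (Ideal.Quotient.mk I 1) := by
      rw [← Ideal.Quotient.mk_eq_mk, ← Ideal.Quotient.mk_eq_mk, ← Submodule.Quotient.mk_smul]
      congr 1
      rw [smul_eq_mul, mul_one]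
    rw [h1, h2]
    exact Submodule.smul_mem_smul ht Submodule.mem_top
  rw [Ideal.mem_iInf_smul_pow_eq_bot_iff] at step2
  obtain ⟨⟨x1, hx1⟩, hs⟩ := step2
  have hmk : Ideal.Quotient.mk I ((1 - x1) * p) = 0 := by
    have hxp : Ideal.Quotient.mk I (x1 * p) = Ideal.Quotient.mk I p := by
      have : Ideal.Quotient.mk I (x1 * p) = x1 • Ideal.Quotient.mk I p := by
        rw [← Ideal.Quotient.mk_eq_mk, ← Ideal.Quotient.mk_eq_mk, ← Submodule.Quotient.mk_smul]
        congr 1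
      rw [this]
      exact hs
    rw [sub_mul, one_mul, map_sub, hxp, sub_self]
  obtain ⟨g, hg⟩ := Ideal.mem_span_singleton'.mp (Ideal.Quotient.eq_zero_iff_mem.mp hmk)
  have hx10 : MvPolynomial.coeff 0 x1 = 0 := by
    have hker : MM ≤ RingHom.ker (constantCoeff : MvPolynomial (Fin r) K →+* K) := by
      rw [hMM, Ideal.span_le]
      rintro y ⟨i, rfl⟩
      simp [RingHom.mem_ker, constantCoeff_X]
    have := hker hx1
    rwa [RingHom.mem_ker, constantCoeff_eq] at this
  refine ⟨g, 1 - x1, ?_, ?_⟩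
  · rw [MvPolynomial.coeff_sub, hx10, sub_zero]
    simp [MvPolynomial.coeff_zero_one]
  · have hps : (f * ((1 - x1 : MvPolynomial (Fin r) K) : MvPowerSeries (Fin r) K) -
        (g : MvPowerSeries (Fin r) K)) * (q : MvPowerSeries (Fin r) K) = 0 := by
      have e1 : ((g * q : MvPolynomial (Fin r) K) : MvPowerSeries (Fin r) K) =
          (g : MvPowerSeries (Fin r) K) * q := by push_cast; ring
      have e2 : (((1 - x1) * p : MvPolynomial (Fin r) K) : MvPowerSeries (Fin r) K) =
          ((1 - x1 : MvPolynomial (Fin r) K) : MvPowerSeries (Fin r) K) * p := by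
        rw [← MvPolynomial.coeToMvPowerSeries.ringHom_apply, map_mul]; rfl
      calc (f * ((1 - x1 : MvPolynomial (Fin r) K) : MvPowerSeries (Fin r) K) -
              (g : MvPowerSeries (Fin r) K)) * (q : MvPowerSeries (Fin r) K)
          = f * (q : MvPowerSeries (Fin r) K) *
              ((1 - x1 : MvPolynomial (Fin r) K) : MvPowerSeries (Fin r) K) -
            (g : MvPowerSeries (Fin r) K) * q := by ring
        _ = ((1 - x1 : MvPolynomial (Fin r) K) : MvPowerSeries (Fin r) K) *
              (p : MvPowerSeries (Fin r) K) -
            ((g * q : MvPolynomial (Fin r) K) : MvPowerSeries (Fin r) K) := by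
              rw [h, e1]; ring
        _ = 0 := by rw [hg, e2, sub_self]
    rcases mul_eq_zero.mp hps with h0 | h0
    · exact sub_eq_zero.mp h0
    · exact absurd (MvPolynomial.coe_eq_zero_iff.mp h0) hq


/-! ### Evaluation of the last variable at 1, and the descent -/

def lastEquiv : MvPolynomial (Fin (r+1)) K ≃ₐ[K] Polynomial (MvPolynomial (Fin r) K) :=
  (renameEquiv K finSuccEquivLast).trans (optionEquivLeft K (Fin r))

lemma lastEquiv_X_last :
    lastEquiv (K := K) (r := r) (X (Fin.last r)) = Polynomial.X := by
  rw [lastEquiv]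
  simp only [AlgEquiv.trans_apply, renameEquiv_apply, rename_X, finSuccEquivLast_last]
  exact optionEquivLeft_X_none K (Fin r)

lemma piLast_eq (W : MvPolynomial (Fin (r+1)) K) :
    piLast W = Polynomial.eval 1 (lastEquiv W) := by
  have hEq : (piLast : MvPolynomial (Fin (r+1)) K →ₐ[K] MvPolynomial (Fin r) K) =
      ((Polynomial.aeval (1 : MvPolynomial (Fin r) K)).restrictScalars K).comp
        lastEquiv.toAlgHom := by
    apply MvPolynomial.algHom_ext
    intro i
    induction i using Fin.lastCases with
    | last =>
        rw [piLast]
        simp only [aeval_X, Fin.snoc_last, AlgHom.comp_apply, AlgHom.restrictScalars_apply,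
          AlgEquiv.toAlgHom_eq_coe, AlgHom.coe_coe, AlgEquiv.coe_toAlgHom]
        rw [lastEquiv_X_last, Polynomial.aeval_X]
    | cast i =>
        rw [piLast]
        simp only [aeval_X, Fin.snoc_castSucc, AlgHom.comp_apply, AlgHom.restrictScalars_apply,
          AlgEquiv.toAlgHom_eq_coe, AlgHom.coe_coe, AlgEquiv.coe_toAlgHom]
        rw [lastEquiv, AlgEquiv.trans_apply, renameEquiv_apply, rename_X,
          finSuccEquivLast_castSucc, optionEquivLeft_X_some, Polynomial.aeval_C]
        simp
  rw [hEq]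
  simp only [AlgHom.comp_apply, AlgHom.restrictScalars_apply, AlgEquiv.toAlgHom_eq_coe,
    AlgHom.coe_coe, AlgEquiv.coe_toAlgHom]
  rw [← Polynomial.coe_aeval_eq_eval]

lemma lastEquiv_X_sub_one :
    lastEquiv (K := K) (r := r) (X (Fin.last r) - 1) =
      Polynomial.X - Polynomial.C 1 := by
  rw [map_sub, lastEquiv_X_last, map_one, Polynomial.C_1]

end AuxTrunc

/-- The Hilbert series of an `r`-sequence `a : ℕʳ → K`, i.e. the multivariate formal
power series `Σ_{n ∈ ℕʳ} a(n)·t₁^{n₁}⋯t_r^{n_r}`. -/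
def hilbertSeries {K : Type*} [Field K] {r : ℕ} (a : (Fin r → ℕ) → K) :
    MvPowerSeries (Fin r) K :=
  fun d => a d

/-- An `r`-sequence is rational if there are polynomials `P, Q ∈ K[t₁,…,t_r]` with `Q`
having nonzero constant term such that `H_a · Q = P` in `K[[t₁,…,t_r]]`. -/
def IsRationalMSeq {K : Type*} [Field K] {r : ℕ} (a : (Fin r → ℕ) → K) : Prop :=
  ∃ P Q : MvPolynomial (Fin r) K, MvPolynomial.coeff 0 Q ≠ 0 ∧
    hilbertSeries a * (Q : MvPowerSeries (Fin r) K) = (P : MvPowerSeries (Fin r) K)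

/-- if a rational `(r+1)`-sequence (`r + 1 ≥ 2`) has, for each fixed initial
`r`-tuple, only finitely many nonzero entries along the last coordinate, then summing out
the last coordinate yields a rational `r`-sequence. -/
theorem truncation_of_rational_is_rational {K : Type*} [Field K] {r : ℕ} (hr : 1 ≤ r)
    (a : (Fin (r + 1) → ℕ) → K) (ha : IsRationalMSeq a)
    (hfin : ∀ m : Fin r → ℕ, {j : ℕ | a (Fin.snoc m j) ≠ 0}.Finite) :
    IsRationalMSeq (fun m : Fin r → ℕ => ∑ᶠ j : ℕ, a (Fin.snoc m j)) := by
  classical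
  obtain ⟨P, Q, hQ0, hHQ⟩ := ha
  have hcoeffH : ∀ d : Fin (r+1) →₀ ℕ,
      MvPowerSeries.coeff d (hilbertSeries a) = a ⇑d := fun _ => rfl
  have hFine : Fine (hilbertSeries a) := by
    intro m
    apply Set.Finite.subset (hfin ⇑m)
    intro j hj
    rw [Function.mem_support, hcoeffH, snocF_coe] at hj
    exact hj
  have hgoal : hilbertSeries (fun m : Fin r → ℕ => ∑ᶠ j : ℕ, a (Fin.snoc m j)) =
      sigmaLast (hilbertSeries a) := by
    apply MvPowerSeries.ext
    intro d
    rw [coeff_sigmaLast]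
    have hL : MvPowerSeries.coeff d
        (hilbertSeries (fun m : Fin r → ℕ => ∑ᶠ j : ℕ, a (Fin.snoc m j))) =
        ∑ᶠ j : ℕ, a (Fin.snoc ⇑d j) := rfl
    rw [hL]
    exact finsum_congr fun j => by rw [hcoeffH, snocF_coe]
  suffices key : ∀ (n : ℕ) (Q P : MvPolynomial (Fin (r+1)) K),
      (lastEquiv Q).natDegree ≤ n → MvPolynomial.coeff 0 Q ≠ 0 →
      hilbertSeries a * (Q : MvPowerSeries (Fin (r+1)) K) = (P : MvPowerSeries (Fin (r+1)) K) →
      IsRationalMSeq (fun m : Fin r → ℕ => ∑ᶠ j : ℕ, a (Fin.snoc m j)) by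
    exact key (lastEquiv Q).natDegree Q P le_rfl hQ0 hHQ
  intro n
  induction n using Nat.strong_induction_on with
  | _ n ih =>
  intro Q P hdeg hQ0c hHQc
  have hmul := fine_sigma_mul (hilbertSeries a) hFine Q
  have hid : sigmaLast (hilbertSeries a) * (piLast Q : MvPowerSeries (Fin r) K) =
      (piLast P : MvPowerSeries (Fin r) K) := by
    rw [← hmul.2, hHQc, sigma_coe]
  by_cases hpi : piLast Q = 0
  · -- the evaluated denominator vanishes identically : divide both sides by X_last - 1
    have hpiP : piLast P = 0 := by
      have h0 : (piLast P : MvPowerSeries (Fin r) K) = 0 := by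
        rw [← hid, hpi, MvPolynomial.coe_zero, mul_zero]
      exact MvPolynomial.coe_eq_zero_iff.mp h0
    have hrootQ : Polynomial.IsRoot (lastEquiv Q) 1 := by
      have := piLast_eq Q
      rw [hpi] at this
      exact this.symm
    have hrootP : Polynomial.IsRoot (lastEquiv P) 1 := by
      have := piLast_eq P
      rw [hpiP] at this
      exact this.symm
    obtain ⟨V, hV⟩ := Polynomial.dvd_iff_isRoot.mpr hrootQ
    obtain ⟨W, hW⟩ := Polynomial.dvd_iff_isRoot.mpr hrootP
    have hQfac : Q = (MvPolynomial.X (Fin.last r) - 1) * lastEquiv.symm V := by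
      apply lastEquiv.injective
      rw [map_mul, AlgEquiv.apply_symm_apply, hV, lastEquiv_X_sub_one]
    have hPfac : P = (MvPolynomial.X (Fin.last r) - 1) * lastEquiv.symm W := by
      apply lastEquiv.injective
      rw [map_mul, AlgEquiv.apply_symm_apply, hW, lastEquiv_X_sub_one]
    have hu : ((MvPolynomial.X (Fin.last r) - 1 : MvPolynomial (Fin (r+1)) K) :
        MvPowerSeries (Fin (r+1)) K) ≠ 0 := by
      intro h0
      have h1 := congrArg (MvPowerSeries.coeff 0) h0
      rw [MvPolynomial.coeff_coe, MvPolynomial.coeff_sub, map_zero] at h1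
      rw [← MvPolynomial.constantCoeff_eq] at h1
      simp [MvPolynomial.constantCoeff_X] at h1
    have hcancel : hilbertSeries a * ((lastEquiv.symm V : MvPolynomial (Fin (r+1)) K) :
        MvPowerSeries (Fin (r+1)) K) = ((lastEquiv.symm W : MvPolynomial (Fin (r+1)) K) :
        MvPowerSeries (Fin (r+1)) K) := by
      have h2 := hHQc
      rw [hQfac, hPfac, MvPolynomial.coe_mul, MvPolynomial.coe_mul] at h2
      apply mul_left_cancel₀ hu
      rw [← h2]
      ring
    have hV0 : V ≠ 0 := by
      intro h0
      apply hQ0c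
      have : Q = 0 := by
        rw [hQfac, h0, map_zero, mul_zero]
      rw [this, MvPolynomial.coeff_zero]
    have hQ1c : MvPolynomial.coeff 0 (lastEquiv.symm V) ≠ 0 := by
      intro h0
      apply hQ0c
      rw [← MvPolynomial.constantCoeff_eq] at h0 ⊢
      rw [hQfac, map_mul, h0, mul_zero]
    have hdegV : (lastEquiv (lastEquiv.symm V)).natDegree < n := by
      rw [AlgEquiv.apply_symm_apply]
      have hXC : (Polynomial.X - Polynomial.C (1 : MvPolynomial (Fin r) K)) ≠ 0 :=
        Polynomial.X_sub_C_ne_zero 1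
      have hmuldeg := Polynomial.natDegree_mul hXC hV0
      rw [← hV, Polynomial.natDegree_X_sub_C] at hmuldeg
      omega
    exact ih _ hdegV (lastEquiv.symm V) (lastEquiv.symm W) le_rfl hQ1c hcancel
  · -- main case : the evaluated denominator is nonzero
    obtain ⟨g, h', hh0, hfh⟩ :=
      exists_poly_denom (sigmaLast (hilbertSeries a)) (piLast Q) (piLast P) hpi hid
    refine ⟨g, h', hh0, ?_⟩
    rw [hgoal]
    exact hfh
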